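/- The Cartesian product K_{1,4} □ K_{1,3} contains the graph K_{4,4} minus one edge as a minor. (This is the content of the paper's Lemma showing K_{1,4} □ K_{1,3} is not projective planar, since K_{4,4} − e is a forbidden minor for the projective plane.) -/

import Mathlib

/-- `H` is a minor of `G`: there is an assignment of pairwise disjoint, connected,
nonempty branch sets in `G` to the vertices of `H`, with an edge of `G` between the
branch sets of any two adjacent vertices of `H`. -/
def SimpleGraph.IsMinorOf {W V : Type*} (H : SimpleGraph W) (G : SimpleGraph V) : Prop :=
  ∃ φ : W → Set V,
    (∀ w, (G.induce (φ w)).Connected) ∧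
    (Pairwise fun w w' => Disjoint (φ w) (φ w')) ∧
    ∀ ⦃w w'⦄, H.Adj w w' → ∃ a ∈ φ w, ∃ b ∈ φ w', G.Adj a b

lemma conn_of_hub {V : Type*} (G : SimpleGraph V) (x : V)
    (h : ∀ y, y = x ∨ G.Adj x y) : G.Connected := by
  haveI : Nonempty V := ⟨x⟩
  constructor
  intro u v
  have r : ∀ y, G.Reachable x y := fun y => by
    rcases h y with rfl | hy
    · exact SimpleGraph.Reachable.refl _
    · exact hy.reachable
  exact (r u).symm.trans (r v)

def fcol : Fin 4 → (Fin 1 ⊕ Fin 3) := ![Sum.inl 0, Sum.inr 0, Sum.inr 1, Sum.inr 2]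

lemma fcol_inj : Function.Injective fcol := by decide

theorem k14_boxProd_k13_hasMinor_k44_minus_e :
    ((completeBipartiteGraph (Fin 4) (Fin 4)).deleteEdges
        {s(Sum.inl 0, Sum.inr 0)}).IsMinorOf
      ((completeBipartiteGraph (Fin 1) (Fin 4)) □ (completeBipartiteGraph (Fin 1) (Fin 3))) := by
  refine ⟨fun w => Sum.elim
      (fun i => {p : (Fin 1 ⊕ Fin 4) × (Fin 1 ⊕ Fin 3) | p.1 = Sum.inr i})
      (fun j => {(Sum.inl 0, fcol j)}) w, ?_, ?_, ?_⟩
  · rintro (i | j)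
    · refine conn_of_hub _ ⟨(Sum.inr i, Sum.inl 0), rfl⟩ ?_
      rintro ⟨⟨a, b⟩, hp⟩
      simp only [Sum.elim_inl, Set.mem_setOf_eq] at hp
      rcases b with b | b
      · left
        apply Subtype.ext
        simpa [Fin.fin_one_eq_zero b] using ‹a = Sum.inr i›
      · right
        simp only [SimpleGraph.comap_adj, Function.Embedding.coe_subtype,
          SimpleGraph.boxProd_adj, hp]
        right
        simp
        exact ‹a = Sum.inr i›.symm
    · refine conn_of_hub _ ⟨(Sum.inl 0, fcol j), rfl⟩ ?_
      rintro ⟨p, hp⟩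
      left
      exact Subtype.ext hp
  · rintro (i | j) (i' | j') hne <;> rw [Set.disjoint_left] <;>
      rintro ⟨a, b⟩ h1 h2 <;>
      simp only [Sum.elim_inl, Sum.elim_inr, Set.mem_setOf_eq,
        Set.mem_singleton_iff, Prod.mk.injEq] at h1 h2
    · exact hne (by rw [h1] at h2; exact congrArg Sum.inl (Sum.inr.inj h2))
    · rw [h2.1] at h1; exact absurd h1 (by simp)
    · rw [h1.1] at h2; exact absurd h2 (by simp)
    · exact hne (congrArg Sum.inr (fcol_inj (h1.2.symm.trans h2.2)))
  · rintro (i | j) (i' | j') h <;> rw [SimpleGraph.deleteEdges_adj] at h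
    · exact absurd h.1 (by simp)
    · exact ⟨(Sum.inr i, fcol j'), rfl, (Sum.inl 0, fcol j'), rfl, by
        simp [SimpleGraph.boxProd_adj]⟩
    · exact ⟨(Sum.inl 0, fcol j), rfl, (Sum.inr i', fcol j), rfl, by
        simp [SimpleGraph.boxProd_adj]⟩
    · exact absurd h.1 (by simp)
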